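/- If f : [a,b] ⊆ (0,∞) → ℝ is symmetrized p-convex on [a,b] (p ≠ 0) and x ∈ [a,b] with x^p ≠ (a^p + b^p)/2, then f(((a^p + b^p)/2)^(1/p)) ≤ (p/(a^p + b^p - 2x^p)) ∫_x^{(a^p+b^p-x^p)^(1/p)} f(t)·t^(p-1) dt ≤ (1/2)[f(x) + f((a^p + b^p - x^p)^(1/p))]. -/

import Mathlib

noncomputable section
open Real Set MeasureTheory intervalIntegral

/-- `f` is p-convex on `[a,b]`. -/
def PConvexOn (p a b : ℝ) (f : ℝ → ℝ) : Prop :=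
  ∀ x ∈ Set.Icc a b, ∀ y ∈ Set.Icc a b, ∀ t ∈ Set.Icc (0:ℝ) 1,
    f ((t * x ^ p + (1 - t) * y ^ p) ^ (1/p)) ≤ t * f x + (1 - t) * f y

/-- The p-symmetrical transform of `f` on `[a,b]`. -/
def PSym (p a b : ℝ) (f : ℝ → ℝ) : ℝ → ℝ :=
  fun x => (f x + f ((a ^ p + b ^ p - x ^ p) ^ (1/p))) / 2

lemma hhaux_rpow_image_Ioo {p u v : ℝ} (hp : p ≠ 0) (hu : 0 < u) (huv : u < v) :
    (fun t : ℝ => t ^ p) '' Ioo u v = Ioo (min (u ^ p) (v ^ p)) (max (u ^ p) (v ^ p)) := by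
  have hv : 0 < v := hu.trans huv
  rcases hp.lt_or_gt with hneg | hpos
  · rw [min_eq_right (rpow_le_rpow_of_nonpos hu huv.le hneg.le),
      max_eq_left (rpow_le_rpow_of_nonpos hu huv.le hneg.le)]
    ext w
    simp only [mem_image, mem_Ioo]
    constructor
    · rintro ⟨t, ⟨h1, h2⟩, rfl⟩
      exact ⟨rpow_lt_rpow_of_neg (hu.trans h1) h2 hneg, rpow_lt_rpow_of_neg hu h1 hneg⟩
    · rintro ⟨h1, h2⟩
      have hw : 0 < w := (rpow_pos_of_pos hv p).trans h1
      refine ⟨w ^ (1/p), ⟨?_, ?_⟩, ?_⟩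
      · rw [one_div]; exact (lt_rpow_inv_iff_of_neg hu hw hneg).2 h2
      · rw [one_div]; exact (rpow_inv_lt_iff_of_neg hw hv hneg).2 h1
      · rw [one_div, Real.rpow_inv_rpow hw.le hp]
  · rw [min_eq_left (rpow_le_rpow hu.le huv.le hpos.le),
      max_eq_right (rpow_le_rpow hu.le huv.le hpos.le)]
    ext w
    simp only [mem_image, mem_Ioo]
    constructor
    · rintro ⟨t, ⟨h1, h2⟩, rfl⟩
      exact ⟨rpow_lt_rpow hu.le h1 hpos, rpow_lt_rpow (hu.trans h1).le h2 hpos⟩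
    · rintro ⟨h1, h2⟩
      have hw : 0 < w := (rpow_pos_of_pos hu p).trans h1
      refine ⟨w ^ (1/p), ⟨?_, ?_⟩, ?_⟩
      · rw [one_div]; exact (lt_rpow_inv_iff_of_pos hu.le hw.le hpos).2 h1
      · rw [one_div]; exact (rpow_inv_lt_iff_of_pos hw.le hv.le hpos).2 h2
      · rw [one_div, Real.rpow_inv_rpow hw.le hp]

lemma hhaux_rpow_hasDeriv {p u v : ℝ} (hu : 0 < u) :
    ∀ t ∈ Ioo u v, HasDerivWithinAt (fun t : ℝ => t ^ p) (p * t ^ (p - 1)) (Ioo u v) t :=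
  fun t ht => (Real.hasDerivAt_rpow_const (Or.inl (hu.trans ht.1).ne')).hasDerivWithinAt

lemma hhaux_rpow_injOn {p u v : ℝ} (hp : p ≠ 0) (hu : 0 < u) :
    InjOn (fun t : ℝ => t ^ p) (Ioo u v) := by
  intro s hs t ht h
  have hs0 : 0 < s := hu.trans hs.1
  have ht0 : 0 < t := hu.trans ht.1
  have h2 := congrArg (fun w : ℝ => w ^ p⁻¹) h
  simpa [Real.rpow_rpow_inv hs0.le hp, Real.rpow_rpow_inv ht0.le hp] using h2

lemma hhaux_subst_core {p u v : ℝ} (hp : p ≠ 0) (hu : 0 < u) (huv : u < v) (F : ℝ → ℝ) :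
    ∫ s in Ioo (min (u ^ p) (v ^ p)) (max (u ^ p) (v ^ p)), F (s ^ (1/p)) =
      |p| * ∫ t in Ioo u v, F t * t ^ (p - 1) := by
  rw [← hhaux_rpow_image_Ioo hp hu huv,
    integral_image_eq_integral_abs_deriv_smul measurableSet_Ioo (hhaux_rpow_hasDeriv hu)
      (hhaux_rpow_injOn hp hu) (fun s => F (s ^ (1/p))), ← MeasureTheory.integral_const_mul]
  apply setIntegral_congr_fun measurableSet_Ioo
  intro t ht
  have ht0 : 0 < t := hu.trans ht.1
  simp only [smul_eq_mul, one_div]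
  rw [Real.rpow_rpow_inv ht0.le hp, abs_mul, abs_of_pos (rpow_pos_of_pos ht0 _)]
  ring

lemma hhaux_subst_int_core {p u v : ℝ} (hp : p ≠ 0) (hu : 0 < u) (huv : u < v) {F : ℝ → ℝ}
    (hF : IntegrableOn (fun t => F t * t ^ (p - 1)) (Ioo u v)) :
    IntegrableOn (fun s => F (s ^ (1/p)))
      (Ioo (min (u ^ p) (v ^ p)) (max (u ^ p) (v ^ p))) := by
  rw [← hhaux_rpow_image_Ioo hp hu huv,
    integrableOn_image_iff_integrableOn_abs_deriv_smul measurableSet_Ioo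
      (hhaux_rpow_hasDeriv hu) (hhaux_rpow_injOn hp hu)]
  have h1 : IntegrableOn (fun t => |p| * (F t * t ^ (p - 1))) (Ioo u v) := hF.const_mul |p|
  refine h1.congr_fun ?_ measurableSet_Ioo
  intro t ht
  have ht0 : 0 < t := hu.trans ht.1
  simp only [smul_eq_mul, one_div]
  rw [Real.rpow_rpow_inv ht0.le hp, abs_mul, abs_of_pos (rpow_pos_of_pos ht0 _)]
  ring

lemma hhaux_subst_eq_lt {p u v : ℝ} (hp : p ≠ 0) (hu : 0 < u) (huv : u < v) (F : ℝ → ℝ) :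
    ∫ s in u ^ p..v ^ p, F (s ^ (1/p)) = p * ∫ t in u..v, F t * t ^ (p - 1) := by
  have key := hhaux_subst_core hp hu huv F
  rcases hp.lt_or_gt with hneg | hpos
  · have hvp : v ^ p < u ^ p := rpow_lt_rpow_of_neg hu huv hneg
    rw [min_eq_right hvp.le, max_eq_left hvp.le] at key
    rw [intervalIntegral.integral_symm, intervalIntegral.integral_of_le hvp.le,
      MeasureTheory.integral_Ioc_eq_integral_Ioo, key,
      intervalIntegral.integral_of_le huv.le, MeasureTheory.integral_Ioc_eq_integral_Ioo,
      abs_of_neg hneg]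
    ring
  · have hup : u ^ p < v ^ p := rpow_lt_rpow hu.le huv hpos
    rw [min_eq_left hup.le, max_eq_right hup.le] at key
    rw [intervalIntegral.integral_of_le hup.le, MeasureTheory.integral_Ioc_eq_integral_Ioo, key,
      intervalIntegral.integral_of_le huv.le, MeasureTheory.integral_Ioc_eq_integral_Ioo,
      abs_of_pos hpos]

lemma hhaux_subst_eq {p u v : ℝ} (hp : p ≠ 0) (hu : 0 < u) (hv : 0 < v) (F : ℝ → ℝ) :
    ∫ s in u ^ p..v ^ p, F (s ^ (1/p)) = p * ∫ t in u..v, F t * t ^ (p - 1) := by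
  rcases lt_trichotomy u v with h | rfl | h
  · exact hhaux_subst_eq_lt hp hu h F
  · simp
  · have := hhaux_subst_eq_lt hp hv h F
    rw [intervalIntegral.integral_symm (v ^ p) (u ^ p),
      intervalIntegral.integral_symm v u, this]
    ring

lemma hhaux_subst_integrable {p u v : ℝ} (hp : p ≠ 0) (hu : 0 < u) (hv : 0 < v) {F : ℝ → ℝ}
    (hF : IntervalIntegrable (fun t => F t * t ^ (p - 1)) volume u v) :
    IntervalIntegrable (fun s => F (s ^ (1/p))) volume (u ^ p) (v ^ p) := by
  have core : ∀ u v : ℝ, 0 < u → u < v →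
      IntervalIntegrable (fun t => F t * t ^ (p - 1)) volume u v →
      IntervalIntegrable (fun s => F (s ^ (1/p))) volume (u ^ p) (v ^ p) := by
    intro u v hu huv hF
    have hio : IntegrableOn (fun t => F t * t ^ (p - 1)) (Ioo u v) := by
      have := hF.1
      exact this.mono_set Ioo_subset_Ioc_self
    have := hhaux_subst_int_core hp hu huv hio
    rw [intervalIntegrable_iff]
    have huIoc : Set.uIoc (u ^ p) (v ^ p) = Ioc (min (u ^ p) (v ^ p)) (max (u ^ p) (v ^ p)) := rfl
    rw [huIoc]
    exact (integrableOn_Ioc_iff_integrableOn_Ioo).2 this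
  rcases lt_trichotomy u v with h | rfl | h
  · exact core u v hu h hF
  · exact IntervalIntegrable.refl
  · exact (core v u (by positivity) h hF.symm).symm

lemma hhaux_rpow_inv_mem_Icc {p a b s : ℝ} (hp : p ≠ 0) (ha : 0 < a) (hab : a ≤ b)
    (hs : s ∈ uIcc (a ^ p) (b ^ p)) : s ^ (1/p) ∈ Icc a b := by
  have hb : 0 < b := ha.trans_le hab
  rcases hp.lt_or_gt with hneg | hpos
  · rw [uIcc_of_ge (rpow_le_rpow_of_nonpos ha hab hneg.le)] at hs
    have hs0 : 0 < s := lt_of_lt_of_le (rpow_pos_of_pos hb p) hs.1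
    constructor
    · rw [one_div]; exact (le_rpow_inv_iff_of_neg ha hs0 hneg).2 hs.2
    · rw [one_div]; exact (rpow_inv_le_iff_of_neg hs0 hb hneg).2 hs.1
  · rw [uIcc_of_le (rpow_le_rpow ha.le hab hpos.le)] at hs
    have hs0 : 0 < s := lt_of_lt_of_le (rpow_pos_of_pos ha p) hs.1
    constructor
    · rw [one_div]; exact (le_rpow_inv_iff_of_pos ha.le hs0.le hpos).2 hs.1
    · rw [one_div]; exact (rpow_inv_le_iff_of_pos hs0.le hb.le hpos).2 hs.2

lemma hhaux_rpow_mem_uIcc {p a b x : ℝ} (hp : p ≠ 0) (ha : 0 < a) (hx : x ∈ Icc a b) :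
    x ^ p ∈ uIcc (a ^ p) (b ^ p) := by
  have hx0 : 0 < x := ha.trans_le hx.1
  rcases hp.lt_or_gt with hneg | hpos
  · rw [uIcc_of_ge (rpow_le_rpow_of_nonpos ha (hx.1.trans hx.2) hneg.le)]
    exact ⟨rpow_le_rpow_of_nonpos hx0 hx.2 hneg.le, rpow_le_rpow_of_nonpos ha hx.1 hneg.le⟩
  · rw [uIcc_of_le (rpow_le_rpow ha.le (hx.1.trans hx.2) hpos.le)]
    exact ⟨rpow_le_rpow ha.le hx.1 hpos.le, rpow_le_rpow hx0.le hx.2 hpos.le⟩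

lemma hhaux_pos_of_mem_uIcc {a b s : ℝ} (ha : 0 < a) (hb : 0 < b) (hs : s ∈ uIcc a b) :
    0 < s := by
  rcases Set.mem_uIcc.1 hs with h | h
  · linarith [h.1]
  · linarith [h.1]

lemma hhaux_exists_coeff {c d s : ℝ} (hne : c ≠ d) (hs : s ∈ uIcc c d) :
    ∃ t ∈ Icc (0:ℝ) 1, t * c + (1 - t) * d = s := by
  rcases hne.lt_or_gt with h | h
  · rw [uIcc_of_le h.le] at hs
    have hdc : d - c ≠ 0 := by intro h2; linarith
    refine ⟨(d - s) / (d - c), ⟨div_nonneg (by linarith [hs.2]) (by linarith),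
      (div_le_one (by linarith)).2 (by linarith [hs.1])⟩, ?_⟩
    field_simp
    ring
  · rw [uIcc_of_ge h.le] at hs
    have hdc : c - d ≠ 0 := by intro h2; linarith
    refine ⟨(s - d) / (c - d), ⟨div_nonneg (by linarith [hs.1]) (by linarith),
      (div_le_one (by linarith)).2 (by linarith [hs.2])⟩, ?_⟩
    field_simp
    ring

lemma hhaux_PSym_apply_rpow {p a b s : ℝ} (hp : p ≠ 0) (hs : 0 < s) (f : ℝ → ℝ) :
    PSym p a b f (s ^ (1/p)) = (f (s ^ (1/p)) + f ((a ^ p + b ^ p - s) ^ (1/p))) / 2 := by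
  simp only [PSym, one_div]
  rw [Real.rpow_inv_rpow hs.le hp]

theorem hermite_hadamard_symmetric_pair (p a b : ℝ) (hp : p ≠ 0) (ha : 0 < a)
    (hab : a < b) (f : ℝ → ℝ) (hf : PConvexOn p a b (PSym p a b f))
    (hint : IntervalIntegrable (fun t => f t * t ^ (p - 1)) volume a b)
    (x : ℝ) (hx : x ∈ Set.Icc a b) (hxne : x ^ p ≠ (a ^ p + b ^ p) / 2) :
    f (((a ^ p + b ^ p) / 2) ^ (1/p)) ≤
        (p / (a ^ p + b ^ p - 2 * x ^ p)) *
          ∫ t in x..((a ^ p + b ^ p - x ^ p) ^ (1/p)), f t * t ^ (p - 1) ∧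
    (p / (a ^ p + b ^ p - 2 * x ^ p)) *
          (∫ t in x..((a ^ p + b ^ p - x ^ p) ^ (1/p)), f t * t ^ (p - 1)) ≤
        (1/2) * (f x + f ((a ^ p + b ^ p - x ^ p) ^ (1/p))) := by
  have hb : 0 < b := ha.trans hab
  have hx0 : 0 < x := ha.trans_le hx.1
  have hap : (0:ℝ) < a ^ p := rpow_pos_of_pos ha p
  have hbp : (0:ℝ) < b ^ p := rpow_pos_of_pos hb p
  set σ := a ^ p + b ^ p with hσdef
  set c := x ^ p with hcdef
  set d := σ - c with hddef
  set y := d ^ (1/p) with hydef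
  have hcI : c ∈ uIcc (a ^ p) (b ^ p) := hhaux_rpow_mem_uIcc hp ha hx
  have hcpos : 0 < c := hhaux_pos_of_mem_uIcc hap hbp hcI
  have refl_mem : ∀ s ∈ uIcc (a ^ p) (b ^ p), σ - s ∈ uIcc (a ^ p) (b ^ p) := by
    intro s hs
    rcases Set.mem_uIcc.1 hs with h | h
    · exact Set.mem_uIcc.2 (Or.inl ⟨by simp only [hσdef]; linarith [h.1, h.2],
        by simp only [hσdef]; linarith [h.1, h.2]⟩)
    · exact Set.mem_uIcc.2 (Or.inr ⟨by simp only [hσdef]; linarith [h.1, h.2],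
        by simp only [hσdef]; linarith [h.1, h.2]⟩)
  have hdI : d ∈ uIcc (a ^ p) (b ^ p) := by
    rw [hddef]; exact refl_mem c hcI
  have hdpos : 0 < d := hhaux_pos_of_mem_uIcc hap hbp hdI
  have hy : y ∈ Icc a b := by
    have := hhaux_rpow_inv_mem_Icc hp ha hab.le hdI
    rwa [← hydef] at this
  have hy0 : 0 < y := ha.trans_le hy.1
  have hyp : y ^ p = d := by rw [hydef, one_div, Real.rpow_inv_rpow hdpos.le hp]
  have hxp1 : c ^ (1/p) = x := by rw [hcdef, one_div, Real.rpow_rpow_inv hx0.le hp]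
  have hcd : c ≠ d := by
    intro h
    apply hxne
    rw [hddef] at h
    linarith
  have hxyI : IntervalIntegrable (fun t => f t * t ^ (p - 1)) volume x y :=
    hint.mono_set (Set.uIcc_subset_uIcc (by rw [Set.uIcc_of_le hab.le]; exact hx)
      (by rw [Set.uIcc_of_le hab.le]; exact hy))
  have hsub : ∫ s in c..d, f (s ^ (1/p)) = p * ∫ t in x..y, f t * t ^ (p - 1) := by
    have := hhaux_subst_eq hp hx0 hy0 f
    rwa [hyp, ← hcdef] at this
  have hGint : IntervalIntegrable (fun s => f (s ^ (1/p))) volume c d := by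
    have := hhaux_subst_integrable hp hx0 hy0 hxyI
    rwa [hyp, ← hcdef] at this
  have hσc : σ - c = d := hddef.symm
  have hσd : σ - d = c := by rw [hddef]; ring
  have hG'int : IntervalIntegrable (fun s => f ((σ - s) ^ (1/p))) volume c d := by
    have := hGint.comp_sub_left σ
    rw [hσc, hσd] at this
    exact this.symm
  have hhint : IntervalIntegrable
      (fun s => (f (s ^ (1/p)) + f ((σ - s) ^ (1/p))) / 2) volume c d :=
    (hGint.add hG'int).div_const 2
  have hrefl : (∫ s in c..d, f ((σ - s) ^ (1/p))) = ∫ s in c..d, f (s ^ (1/p)) := by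
    have := intervalIntegral.integral_comp_sub_left (a := c) (b := d)
      (fun s => f (s ^ (1/p))) σ
    rwa [hσc, hσd] at this
  have hhval : (∫ s in c..d, (f (s ^ (1/p)) + f ((σ - s) ^ (1/p))) / 2) =
      ∫ s in c..d, f (s ^ (1/p)) := by
    rw [intervalIntegral.integral_div, intervalIntegral.integral_add hGint hG'int, hrefl]
    ring
  -- pointwise bounds
  have key_lower : ∀ s ∈ uIcc c d,
      f ((σ / 2) ^ (1/p)) ≤ (f (s ^ (1/p)) + f ((σ - s) ^ (1/p))) / 2 := by
    intro s hs
    have hsI : s ∈ uIcc (a ^ p) (b ^ p) := Set.uIcc_subset_uIcc hcI hdI hs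
    have hs0 : 0 < s := hhaux_pos_of_mem_uIcc hap hbp hsI
    have hs'I : σ - s ∈ uIcc (a ^ p) (b ^ p) := refl_mem s hsI
    have hs'0 : 0 < σ - s := hhaux_pos_of_mem_uIcc hap hbp hs'I
    have hu := hhaux_rpow_inv_mem_Icc hp ha hab.le hsI
    have hv := hhaux_rpow_inv_mem_Icc hp ha hab.le hs'I
    have hconv := hf _ hu _ hv (1/2) (by norm_num)
    have e1 : (1:ℝ)/2 * (s ^ (1/p)) ^ p + (1 - 1/2) * ((σ - s) ^ (1/p)) ^ p = σ / 2 := by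
      simp only [one_div]
      rw [Real.rpow_inv_rpow hs0.le hp, Real.rpow_inv_rpow hs'0.le hp]
      ring
    rw [e1] at hconv
    rw [hhaux_PSym_apply_rpow hp (by positivity : (0:ℝ) < σ / 2) f,
      hhaux_PSym_apply_rpow hp hs0 f, hhaux_PSym_apply_rpow hp hs'0 f, ← hσdef] at hconv
    have e2 : σ - σ / 2 = σ / 2 := by ring
    have e3 : σ - (σ - s) = s := by ring
    rw [e2, e3] at hconv
    linarith
  have key_upper : ∀ s ∈ uIcc c d,
      (f (s ^ (1/p)) + f ((σ - s) ^ (1/p))) / 2 ≤ (f x + f y) / 2 := by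
    intro s hs
    have hsI : s ∈ uIcc (a ^ p) (b ^ p) := Set.uIcc_subset_uIcc hcI hdI hs
    have hs0 : 0 < s := hhaux_pos_of_mem_uIcc hap hbp hsI
    obtain ⟨t, ht, hts⟩ := hhaux_exists_coeff hcd hs
    have hconv := hf x hx y hy t ht
    rw [← hcdef, hyp, hts, hhaux_PSym_apply_rpow hp hs0 f, ← hσdef] at hconv
    have ePx : PSym p a b f x = (f x + f y) / 2 := rfl
    have ePy : PSym p a b f y = (f x + f y) / 2 := by
      simp only [PSym]
      rw [← hσdef, hyp, hσd, hxp1]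
      ring
    rw [ePx, ePy] at hconv
    linarith
  -- integrate the bounds
  set J := ∫ s in c..d, f (s ^ (1/p)) with hJdef
  have hM : (p / (σ - 2 * c)) * (∫ t in x..y, f t * t ^ (p - 1)) = J / (d - c) := by
    have e : σ - 2 * c = d - c := by rw [hddef]; ring
    rw [e, hsub]
    ring
  have hbounds : f ((σ / 2) ^ (1/p)) ≤ J / (d - c) ∧ J / (d - c) ≤ (f x + f y) / 2 := by
    rcases hcd.lt_or_gt with hlt | hlt
    · have hdc : (0:ℝ) < d - c := by linarith
      have h1 := intervalIntegral.integral_mono_on (μ := volume) hlt.le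
        (_root_.intervalIntegrable_const (c := f ((σ / 2) ^ (1/p)))) hhint
        (fun s hs => key_lower s (by rwa [Set.uIcc_of_le hlt.le]))
      have h2 := intervalIntegral.integral_mono_on (μ := volume) hlt.le hhint
        (_root_.intervalIntegrable_const (c := (f x + f y) / 2))
        (fun s hs => key_upper s (by rwa [Set.uIcc_of_le hlt.le]))
      rw [intervalIntegral.integral_const, smul_eq_mul, hhval] at h1
      rw [intervalIntegral.integral_const, smul_eq_mul, hhval] at h2
      constructor
      · rw [le_div_iff₀ hdc]; linarith
      · rw [div_le_iff₀ hdc]; linarith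
    · have hdc : (0:ℝ) < c - d := by linarith
      have h1 := intervalIntegral.integral_mono_on (μ := volume) hlt.le
        (_root_.intervalIntegrable_const (c := f ((σ / 2) ^ (1/p)))) hhint.symm
        (fun s hs => key_lower s (by rwa [Set.uIcc_of_ge hlt.le]))
      have h2 := intervalIntegral.integral_mono_on (μ := volume) hlt.le hhint.symm
        (_root_.intervalIntegrable_const (c := (f x + f y) / 2))
        (fun s hs => key_upper s (by rwa [Set.uIcc_of_ge hlt.le]))
      have hswap : (∫ s in d..c, (f (s ^ (1/p)) + f ((σ - s) ^ (1/p))) / 2) = -J := by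
        rw [intervalIntegral.integral_symm, hhval]
      rw [intervalIntegral.integral_const, smul_eq_mul, hswap] at h1
      rw [intervalIntegral.integral_const, smul_eq_mul, hswap] at h2
      have e : J / (d - c) = -J / (c - d) := by
        rw [← neg_sub c d, div_neg, neg_div]
      rw [e]
      constructor
      · rw [le_div_iff₀ hdc]; linarith
      · rw [div_le_iff₀ hdc]; linarith
  exact ⟨by linarith [hbounds.1, hM], by linarith [hbounds.2, hM]⟩
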